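/- Let Φ be an irreducible reduced root system with positive roots α ⪯ γ (in the usual dominance order) satisfying ht(γ) − ht(α) ≥ 2. Then there exists a positive root β with α ≺ β ≺ γ. -/

import Mathlib

open Finset

/-- A (concrete) reduced root system in a real inner product space, with a fixed base `Δ`
of simple roots and the integer coefficient function of roots with respect to the base. -/
structure RootSystemData (V : Type*) [NormedAddCommGroup V] [InnerProductSpace ℝ V] where
  /-- the finite set of roots -/
  Φ : Finset V
  /-- the base of simple roots -/
  Δ : Finset V
  nonempty : Φ.Nonempty
  Δ_subset : Δ ⊆ Φ
  zero_not_mem : (0 : V) ∉ Φ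
  /-- `coeff α δ` is the coefficient of the simple root `δ` in `α` -/
  coeff : V → V → ℤ
  root_eq_sum : ∀ α ∈ Φ, α = ∑ δ ∈ Δ, (coeff α δ : ℝ) • δ
  coeff_sign : ∀ α ∈ Φ, (∀ δ ∈ Δ, 0 ≤ coeff α δ) ∨ (∀ δ ∈ Δ, coeff α δ ≤ 0)
  coeff_self : ∀ δ ∈ Δ, coeff δ δ = 1
  coeff_ne : ∀ δ ∈ Δ, ∀ δ' ∈ Δ, δ ≠ δ' → coeff δ δ' = 0
  linIndep : LinearIndependent ℝ (fun δ : ↥Δ => (δ : V))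
  neg_mem : ∀ α ∈ Φ, -α ∈ Φ
  reduced : ∀ α ∈ Φ, ∀ t : ℝ, t • α ∈ Φ → t = 1 ∨ t = -1
  /-- the integer Cartan pairing `⟨α, β^∨⟩` -/
  cartan : V → V → ℤ
  cartan_eq : ∀ α ∈ Φ, ∀ β ∈ Φ, (cartan α β : ℝ) * (inner ℝ β β : ℝ) = 2 * (inner ℝ α β : ℝ)
  reflect_mem : ∀ α ∈ Φ, ∀ β ∈ Φ, α - (cartan α β : ℝ) • β ∈ Φ
  irreducible : ∀ S ⊆ Φ, (∀ α ∈ S, ∀ β ∈ Φ, β ∉ S → (inner ℝ α β : ℝ) = 0) → S = ∅ ∨ S = Φ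

namespace RootSystemData

variable {V : Type*} [NormedAddCommGroup V] [InnerProductSpace ℝ V] (R : RootSystemData V)

/-- The height of a root: the sum of its coefficients over the base. -/
def ht (α : V) : ℤ := ∑ δ ∈ R.Δ, R.coeff α δ

/-- `α` is a positive root. -/
def IsPos (α : V) : Prop := α ∈ R.Φ ∧ ∀ δ ∈ R.Δ, 0 ≤ R.coeff α δ

/-- The set of positive roots. -/
def posRoots : Finset V := R.Φ.filter (fun α => ∀ δ ∈ R.Δ, 0 ≤ R.coeff α δ)

/-- The set of negative roots. -/
def negRoots : Finset V := R.Φ.filter (fun α => ∀ δ ∈ R.Δ, R.coeff α δ ≤ 0)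

/-- The Coxeter number `h = 1 + max height`. -/
def coxeter : ℤ := 1 + R.Φ.sup' R.nonempty R.ht

/-- The dominance order: `γ - α` is a nonnegative combination of simple roots. -/
def le (α γ : V) : Prop := ∀ δ ∈ R.Δ, R.coeff α δ ≤ R.coeff γ δ

/-- Strict dominance order. -/
def lt (α γ : V) : Prop := R.le α γ ∧ α ≠ γ

/-- `Φ_k`: the roots of height congruent to `k` modulo the Coxeter number. -/
def phiMod (k : ℤ) : Finset V := R.Φ.filter (fun γ => R.ht γ % R.coxeter = k % R.coxeter)

end RootSystemData

namespace RootSystemData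
variable {V : Type*} [NormedAddCommGroup V] [InnerProductSpace ℝ V] (R : RootSystemData V)

lemma aux_coeff_eq {α : V} (hα : α ∈ R.Φ) (c : V → ℝ)
    (h : α = ∑ δ ∈ R.Δ, c δ • δ) : ∀ δ ∈ R.Δ, (R.coeff α δ : ℝ) = c δ := by
  intro δ hδ
  have h2 := R.root_eq_sum α hα
  have hz : ∑ δ ∈ R.Δ, ((R.coeff α δ : ℝ) - c δ) • δ = 0 := by
    simp only [sub_smul, Finset.sum_sub_distrib, ← h2, ← h, sub_self]
  have hz2 : ∑ d : ↥R.Δ, ((R.coeff α (d : V) : ℝ) - c (d : V)) • (d : V) = 0 := by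
    rw [Finset.sum_coe_sort R.Δ (fun d => ((R.coeff α d : ℝ) - c d) • d)]
    exact hz
  have := Fintype.linearIndependent_iff.mp R.linIndep
    (fun d => (R.coeff α (d : V) : ℝ) - c (d : V)) hz2 ⟨δ, hδ⟩
  linarith [this]

lemma aux_coeff_eq_int {α : V} (hα : α ∈ R.Φ) (c : V → ℤ)
    (h : α = ∑ δ ∈ R.Δ, (c δ : ℝ) • δ) : ∀ δ ∈ R.Δ, R.coeff α δ = c δ := by
  intro δ hδ
  exact_mod_cast R.aux_coeff_eq hα (fun d => (c d : ℝ)) h δ hδ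

lemma aux_inner_self_pos {α : V} (hα : α ∈ R.Φ) : 0 < (inner ℝ α α : ℝ) := by
  have h0 : α ≠ 0 := fun h => R.zero_not_mem (h ▸ hα)
  rcases (real_inner_self_nonneg (x := α)).lt_or_eq with h | h
  · exact h
  · exact absurd ((@inner_self_eq_zero ℝ _ _ _ _ α).mp h.symm) h0

lemma aux_cartan_pos {α β : V} (hα : α ∈ R.Φ) (hβ : β ∈ R.Φ)
    (h : 0 < (inner ℝ α β : ℝ)) : 1 ≤ R.cartan α β := by
  have he := R.cartan_eq α hα β hβ
  have hb := R.aux_inner_self_pos hβ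
  by_contra hc
  push_neg at hc
  have : (R.cartan α β : ℝ) ≤ 0 := by exact_mod_cast Int.lt_add_one_iff.mp (by omega : R.cartan α β < 0 + 1)
  nlinarith

lemma aux_sub_mem {α β : V} (hα : α ∈ R.Φ) (hβ : β ∈ R.Φ) (hne : α ≠ β)
    (h : 0 < (inner ℝ α β : ℝ)) : α - β ∈ R.Φ := by
  have h1 := R.aux_cartan_pos hα hβ h
  have h2 := R.aux_cartan_pos hβ hα (by rwa [real_inner_comm])
  rcases eq_or_lt_of_le h1 with heq | hgt
  · have := R.reflect_mem α hα β hβ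
    rwa [← heq, Int.cast_one, one_smul] at this
  · rcases eq_or_lt_of_le h2 with heq2 | hgt2
    · have := R.reflect_mem β hβ α hα
      rw [← heq2, Int.cast_one, one_smul] at this
      have := R.neg_mem _ this
      rwa [neg_sub] at this
    · -- both cartan ≥ 2 : contradiction with α ≠ β
      exfalso
      have e1 := R.cartan_eq α hα β hβ
      have e2 := R.cartan_eq β hβ α hα
      have hbb := R.aux_inner_self_pos hβ
      have haa := R.aux_inner_self_pos hα
      have c1 : (2 : ℝ) ≤ (R.cartan α β : ℝ) := by exact_mod_cast hgt
      have c2 : (2 : ℝ) ≤ (R.cartan β α : ℝ) := by exact_mod_cast hgt2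
      have hab1 : (inner ℝ β β : ℝ) ≤ (inner ℝ α β : ℝ) := by nlinarith
      have hcomm : (inner ℝ β α : ℝ) = (inner ℝ α β : ℝ) := real_inner_comm α β
      have hab2 : (inner ℝ α α : ℝ) ≤ (inner ℝ α β : ℝ) := by nlinarith
      have hsub : (inner ℝ (α - β) (α - β) : ℝ) ≤ 0 := by
        rw [inner_sub_sub_self]
        linarith
      exact hne (sub_eq_zero.mp (real_inner_self_nonpos.mp hsub))

lemma aux_ht_simple {δ : V} (hδ : δ ∈ R.Δ) : R.ht δ = 1 := by
  unfold ht
  rw [Finset.sum_eq_single δ]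
  · exact R.coeff_self δ hδ
  · intro b hb hne; exact R.coeff_ne δ hδ b hb (Ne.symm hne)
  · intro h; exact absurd hδ h

lemma aux_ht_pos {α : V} (hα : R.IsPos α) : 1 ≤ R.ht α := by
  obtain ⟨hmem, hpos⟩ := hα
  by_contra hc
  push_neg at hc
  have hall : ∀ δ ∈ R.Δ, R.coeff α δ = 0 := by
    intro δ hδ
    by_contra hne
    have h1 : 1 ≤ R.coeff α δ := lt_of_le_of_ne (hpos δ hδ) (Ne.symm hne)
    have := Finset.sum_le_sum (f := fun _ => (0:ℤ)) (g := R.coeff α) (s := R.Δ) ?_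
    · unfold ht at hc
      have h2 := Finset.single_le_sum (f := R.coeff α) (fun d hd => hpos d hd) hδ
      omega
    · exact fun d hd => hpos d hd
  have := R.root_eq_sum α hmem
  rw [Finset.sum_eq_zero (fun d hd => by rw [hall d hd]; simp)] at this
  exact R.zero_not_mem (this ▸ hmem)

end RootSystemData

open RootSystemData in
/-- If `α ⪯ γ` are positive roots of an irreducible reduced root system with
`ht γ - ht α ≥ 2`, then there is a positive root `β` with `α ≺ β ≺ γ`. -/
theorem exists_intermediate_root
    {V : Type*} [NormedAddCommGroup V] [InnerProductSpace ℝ V]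
    (R : RootSystemData V) (α γ : V) (hα : R.IsPos α) (hγ : R.IsPos γ)
    (hle : R.le α γ) (hht : 2 ≤ R.ht γ - R.ht α) :
    ∃ β : V, R.IsPos β ∧ R.lt α β ∧ R.lt β γ := by
  obtain ⟨hαΦ, hαpos⟩ := hα
  obtain ⟨hγΦ, hγpos⟩ := hγ
  set c : V → ℤ := fun δ => R.coeff γ δ - R.coeff α δ with hc
  have hc0 : ∀ δ ∈ R.Δ, 0 ≤ c δ := fun δ hδ => by
    simp only [hc, sub_nonneg]; exact hle δ hδ
  have hdiff : γ - α = ∑ δ ∈ R.Δ, (c δ : ℝ) • δ := by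
    rw [R.root_eq_sum γ hγΦ, R.root_eq_sum α hαΦ, ← Finset.sum_sub_distrib]
    refine Finset.sum_congr rfl (fun δ hδ => ?_)
    rw [← sub_smul]; push_cast [hc]; ring_nf
  have hγα : γ - α ≠ 0 := by
    intro h
    have h2 : γ = α := by rwa [sub_eq_zero] at h
    rw [h2] at hht; omega
  have hpos : 0 < (inner ℝ (γ - α) (γ - α) : ℝ) := by
    rcases (real_inner_self_nonneg (x := γ - α)).lt_or_eq with h | h
    · exact h
    · exact absurd ((@inner_self_eq_zero ℝ _ _ _ _ (γ - α)).mp h.symm) hγα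
  have key : (inner ℝ (γ - α) γ : ℝ) - (inner ℝ (γ - α) α : ℝ) = (inner ℝ (γ - α) (γ - α) : ℝ) := by
    rw [inner_sub_right]
  have hhtα : 1 ≤ R.ht α := R.aux_ht_pos ⟨hαΦ, hαpos⟩
  rcases lt_or_ge (0 : ℝ) (inner ℝ (γ - α) γ) with hA | hA
  · -- Case A : β = γ - δ
    have hsum : (0 : ℝ) < ∑ δ ∈ R.Δ, (c δ : ℝ) * (inner ℝ δ γ : ℝ) := by
      have he : (inner ℝ (γ - α) γ : ℝ) = ∑ δ ∈ R.Δ, (c δ : ℝ) * (inner ℝ δ γ : ℝ) := by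
        rw [hdiff, sum_inner]
        exact Finset.sum_congr rfl (fun δ _ => real_inner_smul_left δ γ _)
      linarith
    obtain ⟨δ, hδ, hcδ, hinn⟩ : ∃ δ ∈ R.Δ, 0 < c δ ∧ 0 < (inner ℝ δ γ : ℝ) := by
      by_contra hcon
      push_neg at hcon
      have : ∑ δ ∈ R.Δ, (c δ : ℝ) * (inner ℝ δ γ : ℝ) ≤ 0 := by
        refine Finset.sum_nonpos (fun δ hδ => ?_)
        rcases (hc0 δ hδ).lt_or_eq with h1 | h1
        · have := hcon δ hδ h1
          have hcr : (0:ℝ) ≤ (c δ : ℝ) := by exact_mod_cast (hc0 δ hδ)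
          exact mul_nonpos_of_nonneg_of_nonpos hcr this
        · rw [← h1]; simp
      linarith
    have hδΦ : δ ∈ R.Φ := R.Δ_subset hδ
    have hhtδ : R.ht δ = 1 := R.aux_ht_simple hδ
    have hγδ : γ ≠ δ := by
      intro h
      rw [h] at hht
      rw [hhtδ] at hht
      omega
    have hβΦ : γ - δ ∈ R.Φ := R.aux_sub_mem hγΦ hδΦ hγδ (by rwa [real_inner_comm])
    have hco : ∀ δ' ∈ R.Δ, R.coeff (γ - δ) δ' = R.coeff γ δ' - R.coeff δ δ' := by
      refine R.aux_coeff_eq_int hβΦ _ ?_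
      conv_lhs => rw [R.root_eq_sum γ hγΦ, R.root_eq_sum δ hδΦ]
      rw [← Finset.sum_sub_distrib]
      refine Finset.sum_congr rfl (fun d _ => ?_)
      rw [← sub_smul]; push_cast; ring_nf
    have hc1 : 1 ≤ c δ := hcδ
    have hhtβ : R.ht (γ - δ) = R.ht γ - 1 := by
      unfold RootSystemData.ht
      rw [Finset.sum_congr rfl (fun d hd => hco d hd), Finset.sum_sub_distrib]
      have : ∑ d ∈ R.Δ, R.coeff δ d = R.ht δ := rfl
      rw [this, hhtδ]
    refine ⟨γ - δ, ⟨hβΦ, ?_⟩, ⟨?_, ?_⟩, ⟨?_, ?_⟩⟩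
    · intro d hd
      rw [hco d hd]
      by_cases h : d = δ
      · subst h
        rw [R.coeff_self d hd]
        have := hαpos d hd
        simp only [hc] at hc1
        omega
      · rw [R.coeff_ne δ hδ d hd (fun he => h he.symm)]
        have := hγpos d hd; omega
    · intro d hd
      rw [hco d hd]
      by_cases h : d = δ
      · subst h
        rw [R.coeff_self d hd]
        simp only [hc] at hc1
        omega
      · rw [R.coeff_ne δ hδ d hd (fun he => h he.symm)]
        have := hle d hd; omega
    · intro h
      rw [← h] at hhtβ
      omega
    · intro d hd
      rw [hco d hd]
      by_cases h : d = δ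
      · subst h; rw [R.coeff_self d hd]; omega
      · rw [R.coeff_ne δ hδ d hd (fun he => h he.symm)]; omega
    · intro h
      have := hco δ hδ
      rw [h, R.coeff_self δ hδ] at this
      omega
  · -- Case B : β = α + δ
    have hB : (inner ℝ (γ - α) α : ℝ) < 0 := by linarith
    have hsum : ∑ δ ∈ R.Δ, (c δ : ℝ) * (inner ℝ δ α : ℝ) < 0 := by
      have he : (inner ℝ (γ - α) α : ℝ) = ∑ δ ∈ R.Δ, (c δ : ℝ) * (inner ℝ δ α : ℝ) := by
        rw [hdiff, sum_inner]
        exact Finset.sum_congr rfl (fun δ _ => real_inner_smul_left δ α _)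
      linarith
    obtain ⟨δ, hδ, hcδ, hinn⟩ : ∃ δ ∈ R.Δ, 0 < c δ ∧ (inner ℝ δ α : ℝ) < 0 := by
      by_contra hcon
      push_neg at hcon
      have : (0:ℝ) ≤ ∑ δ ∈ R.Δ, (c δ : ℝ) * (inner ℝ δ α : ℝ) := by
        refine Finset.sum_nonneg (fun δ hδ => ?_)
        rcases (hc0 δ hδ).lt_or_eq with h1 | h1
        · have := hcon δ hδ h1
          have hcr : (0:ℝ) ≤ (c δ : ℝ) := by exact_mod_cast (hc0 δ hδ)
          exact mul_nonneg hcr this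
        · rw [← h1]; simp
      linarith
    have hδΦ : δ ∈ R.Φ := R.Δ_subset hδ
    have hnδΦ : -δ ∈ R.Φ := R.neg_mem δ hδΦ
    have hαδ : α ≠ -δ := by
      intro h
      have hco' : ∀ d ∈ R.Δ, R.coeff α d = -R.coeff δ d := by
        refine R.aux_coeff_eq_int hαΦ _ ?_
        rw [h]
        conv_lhs => rw [R.root_eq_sum δ hδΦ]
        rw [← Finset.sum_neg_distrib]
        refine Finset.sum_congr rfl (fun d _ => ?_)
        push_cast; rw [neg_smul]
      have := hco' δ hδ
      rw [R.coeff_self δ hδ] at this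
      have := hαpos δ hδ
      omega
    have hinn' : 0 < (inner ℝ α (-δ) : ℝ) := by
      rw [inner_neg_right]
      have : (inner ℝ α δ : ℝ) = (inner ℝ δ α : ℝ) := real_inner_comm δ α
      linarith
    have hβΦ : α + δ ∈ R.Φ := by
      have := R.aux_sub_mem hαΦ hnδΦ hαδ hinn'
      rwa [sub_neg_eq_add] at this
    have hco : ∀ d ∈ R.Δ, R.coeff (α + δ) d = R.coeff α d + R.coeff δ d := by
      refine R.aux_coeff_eq_int hβΦ _ ?_
      conv_lhs => rw [R.root_eq_sum α hαΦ, R.root_eq_sum δ hδΦ]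
      rw [← Finset.sum_add_distrib]
      refine Finset.sum_congr rfl (fun d _ => ?_)
      rw [← add_smul]; push_cast; ring_nf
    have hhtδ : R.ht δ = 1 := R.aux_ht_simple hδ
    have hhtβ : R.ht (α + δ) = R.ht α + 1 := by
      unfold RootSystemData.ht
      rw [Finset.sum_congr rfl (fun d hd => hco d hd), Finset.sum_add_distrib]
      have : ∑ d ∈ R.Δ, R.coeff δ d = R.ht δ := rfl
      rw [this, hhtδ]
    have hc1 : 1 ≤ c δ := hcδ
    refine ⟨α + δ, ⟨hβΦ, ?_⟩, ⟨?_, ?_⟩, ⟨?_, ?_⟩⟩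
    · intro d hd
      rw [hco d hd]
      by_cases h : d = δ
      · subst h; rw [R.coeff_self d hd]; have := hαpos d hd; omega
      · rw [R.coeff_ne δ hδ d hd (fun he => h he.symm)]
        have := hαpos d hd; omega
    · intro d hd
      rw [hco d hd]
      by_cases h : d = δ
      · subst h; rw [R.coeff_self d hd]; omega
      · rw [R.coeff_ne δ hδ d hd (fun he => h he.symm)]; omega
    · intro h
      rw [← h] at hhtβ
      omega
    · intro d hd
      rw [hco d hd]
      by_cases h : d = δ
      · subst h
        rw [R.coeff_self d hd]
        simp only [hc] at hc1
        omega
      · rw [R.coeff_ne δ hδ d hd (fun he => h he.symm)]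
        have := hle d hd; omega
    · intro h
      rw [h] at hhtβ
      omega
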